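/- Variance bound on the SCDF-SAGA update direction (Corollary 2, with explicit provable constants): Suppose Assumption 2 holds, let x* ∈ ℝ^N and β_i^* := −(∂G(x*))^T∇F_i(G(x*)). Then for every x ∈ ℝ^N, every table φ = (φ_1,…,φ_m) of points of ℝ^N, every integer A ≥ 1, and every family of vectors β_1,…,β_n ∈ ℝ^N, E_{σ,i}[ ‖(∂Ĝ(σ,x,φ))^T ∇F_i(Ĝ(σ,x,φ)) + β_i‖² ] ≤ 8(B_F² L_G² + B_G⁴ L_F²)·((1/A)·(1/m)∑_{j=1}^m ‖x − φ_j‖² + ‖x − x*‖²) + 2·(1/n)∑_{i=1}^n ‖β_i − β_i^*‖². -/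

import Mathlib

noncomputable section

open Finset
open scoped RealInnerProductSpace

abbrev Euc (N : ℕ) := EuclideanSpace ℝ (Fin N)

/-- Frobenius norm of a linear map between Euclidean spaces: the square root of the
sum of the squared norms of the columns. -/
def frobNorm {N M : ℕ} (T : Euc N →L[ℝ] Euc M) : ℝ :=
  Real.sqrt (∑ j : Fin N, ‖T (EuclideanSpace.single j 1)‖ ^ 2)

/-- The averaged inner function `G = (1/m) ∑ⱼ Gⱼ`. -/
def Gbar {m N M : ℕ} (G : Fin m → Euc N → Euc M) (x : Euc N) : Euc M :=
  (m : ℝ)⁻¹ • ∑ j, G j x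

/-- The averaged Jacobian `∂G = (1/m) ∑ⱼ ∂Gⱼ`. -/
def Jbar {m N M : ℕ} (J : Fin m → Euc N → (Euc N →L[ℝ] Euc M)) (x : Euc N) :
    Euc N →L[ℝ] Euc M :=
  (m : ℝ)⁻¹ • ∑ j, J j x

/-- `Tᵀ v`: the transpose (adjoint) of `T` applied to `v`. -/
def transApp {N M : ℕ} (T : Euc N →L[ℝ] Euc M) (v : Euc M) : Euc N :=
  ContinuousLinearMap.adjoint T v

/-- Assumption 2 of the paper: bounded gradients, Lipschitz gradients, bounded
Jacobians (Frobenius norm), Lipschitz inner functions and Lipschitz Jacobians. -/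
def Assumption2 {n m N M : ℕ} (G : Fin m → Euc N → Euc M)
    (J : Fin m → Euc N → (Euc N →L[ℝ] Euc M))
    (gradF : Fin n → Euc M → Euc M) (BF LF BG LG : ℝ) : Prop :=
  (∀ i y, ‖gradF i y‖ ≤ BF) ∧
  (∀ i y y', ‖gradF i y - gradF i y'‖ ≤ LF * ‖y - y'‖) ∧
  (∀ j x, frobNorm (J j x) ≤ BG) ∧
  (∀ j x x', ‖G j x - G j x'‖ ≤ BG * ‖x - x'‖) ∧
  (∀ j x x', frobNorm (J j x - J j x') ≤ LG * ‖x - x'‖)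

/-- Continuous differentiability of the data, with the prescribed Jacobians and
gradients. -/
def SmoothData {n m N M : ℕ} (Fi : Fin n → Euc M → ℝ) (G : Fin m → Euc N → Euc M)
    (J : Fin m → Euc N → (Euc N →L[ℝ] Euc M)) (gradF : Fin n → Euc M → Euc M) : Prop :=
  (∀ j x, HasFDerivAt (G j) (J j x) x) ∧ (∀ j, Continuous (J j)) ∧
  (∀ i y, HasGradientAt (Fi i) (gradF i y) y) ∧ (∀ i, Continuous (gradF i))

/-- Uniform average over all tuples `σ ∈ {1,…,m}^A`. -/
def Esig {m A : ℕ} (f : (Fin A → Fin m) → ℝ) : ℝ :=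
  (∑ σ : Fin A → Fin m, f σ) / (m ^ A : ℝ)

/-- The SAGA estimator `Ĝ(σ,x,φ)` of the inner function. -/
def GhatSAGA {m N M : ℕ} (G : Fin m → Euc N → Euc M) {A : ℕ}
    (σ : Fin A → Fin m) (x : Euc N) (φ : Fin m → Euc N) : Euc M :=
  (A : ℝ)⁻¹ • ∑ l, (G (σ l) x - G (σ l) (φ (σ l))) + (m : ℝ)⁻¹ • ∑ j, G j (φ j)

/-- The SAGA estimator `∂Ĝ(σ,x,φ)` of the Jacobian. -/
def JhatSAGA {m N M : ℕ} (J : Fin m → Euc N → (Euc N →L[ℝ] Euc M)) {A : ℕ}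
    (σ : Fin A → Fin m) (x : Euc N) (φ : Fin m → Euc N) : Euc N →L[ℝ] Euc M :=
  (A : ℝ)⁻¹ • ∑ l, (J (σ l) x - J (σ l) (φ (σ l))) + (m : ℝ)⁻¹ • ∑ j, J j (φ j)

/-! ### Auxiliary lemmas -/

section Aux

variable {E : Type*} [NormedAddCommGroup E] [InnerProductSpace ℝ E]

omit [InnerProductSpace ℝ E] in
lemma two_sq_bound (a b : E) : ‖a + b‖ ^ 2 ≤ 2 * ‖a‖ ^ 2 + 2 * ‖b‖ ^ 2 := by
  have h : ‖a + b‖ ≤ ‖a‖ + ‖b‖ := norm_add_le a b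
  nlinarith [norm_nonneg a, norm_nonneg b, norm_nonneg (a + b), sq_nonneg (‖a‖ - ‖b‖)]

lemma var_sum {m : ℕ} (Z : Fin m → E) (hZ : ∑ j, Z j = 0) :
    ∀ A : ℕ, ∑ σ : Fin A → Fin m, ‖∑ l, Z (σ l)‖ ^ 2
      = (A : ℝ) * (m : ℝ) ^ (A - 1) * ∑ j, ‖Z j‖ ^ 2 := by
  intro A
  induction A with
  | zero => simp
  | succ A ih =>
    have h1 : ∑ σ : Fin (A + 1) → Fin m, ‖∑ l, Z (σ l)‖ ^ 2
        = ∑ p : Fin m × (Fin A → Fin m), ‖Z p.1 + ∑ l, Z (p.2 l)‖ ^ 2 := by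
      rw [← Equiv.sum_comp (Fin.consEquiv fun _ : Fin (A + 1) => Fin m)
        (fun σ : Fin (A + 1) → Fin m => ‖∑ l, Z (σ l)‖ ^ 2)]
      refine Finset.sum_congr rfl fun p _ => ?_
      congr 1
      rw [Fin.sum_univ_succ]
      simp [Fin.consEquiv]
    rw [h1, Fintype.sum_prod_type]
    simp_rw [norm_add_sq_real]
    have h2 : ∀ a : Fin m,
        ∑ τ : Fin A → Fin m, (‖Z a‖ ^ 2 + 2 * ⟪Z a, ∑ l, Z (τ l)⟫ + ‖∑ l, Z (τ l)‖ ^ 2)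
        = (m : ℝ) ^ A * ‖Z a‖ ^ 2
          + 2 * ⟪Z a, ∑ τ : Fin A → Fin m, ∑ l, Z (τ l)⟫
          + (A : ℝ) * (m : ℝ) ^ (A - 1) * ∑ j, ‖Z j‖ ^ 2 := by
      intro a
      rw [Finset.sum_add_distrib, Finset.sum_add_distrib, ih, Finset.sum_const,
        Finset.card_univ, Fintype.card_fun, Fintype.card_fin, Fintype.card_fin,
        ← Finset.mul_sum, ← inner_sum]
      push_cast
      ring
    rw [Finset.sum_congr rfl fun a _ => h2 a]
    rw [Finset.sum_add_distrib, Finset.sum_add_distrib, Finset.sum_const, Finset.card_univ,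
      Fintype.card_fin, ← Finset.mul_sum, ← Finset.mul_sum, ← sum_inner, hZ, inner_zero_left,
      nsmul_eq_mul]
    rcases A with _ | k
    · simp
    · have hpow : (m : ℝ) * (m : ℝ) ^ (k + 1 - 1) = (m : ℝ) ^ (k + 1) := by
        rw [Nat.add_sub_cancel]; ring
      simp only [Nat.add_sub_cancel] at *
      rw [← hpow]
      push_cast
      ring

end Aux

section EsigLemmas

variable {m A : ℕ}

lemma Esig_const (hm : 0 < m) (c : ℝ) : Esig (fun _ : Fin A → Fin m => c) = c := by
  have : ((m : ℝ) ^ A) ≠ 0 := by positivity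
  simp [Esig, Finset.sum_const, Finset.card_univ, Fintype.card_fun, nsmul_eq_mul]
  field_simp

lemma Esig_mono (hm : 0 < m) {f g : (Fin A → Fin m) → ℝ} (h : ∀ σ, f σ ≤ g σ) :
    Esig f ≤ Esig g := by
  have hpos : (0 : ℝ) < (m : ℝ) ^ A := by positivity
  exact div_le_div_of_nonneg_right (Finset.sum_le_sum fun σ _ => h σ) hpos.le

lemma Esig_add (f g : (Fin A → Fin m) → ℝ) :
    Esig (fun σ => f σ + g σ) = Esig f + Esig g := by
  simp [Esig, Finset.sum_add_distrib, add_div]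

lemma Esig_mul (c : ℝ) (f : (Fin A → Fin m) → ℝ) :
    Esig (fun σ => c * f σ) = c * Esig f := by
  simp [Esig, ← Finset.mul_sum, mul_div_assoc]

end EsigLemmas

/-- SAGA variance bound in an abstract real inner product space. -/
lemma saga_var {E : Type*} [NormedAddCommGroup E] [InnerProductSpace ℝ E]
    {m A : ℕ} (hm : 0 < m) (hA : 0 < A) (Y : Fin m → E) :
    Esig (fun σ : Fin A → Fin m =>
        ‖(A : ℝ)⁻¹ • ∑ l, Y (σ l) - (m : ℝ)⁻¹ • ∑ j, Y j‖ ^ 2)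
      ≤ (A : ℝ)⁻¹ * ((m : ℝ)⁻¹ * ∑ j, ‖Y j‖ ^ 2) := by
  have hmR : (m : ℝ) ≠ 0 := Nat.cast_ne_zero.2 hm.ne'
  have hAR : (A : ℝ) ≠ 0 := Nat.cast_ne_zero.2 hA.ne'
  set μ : E := (m : ℝ)⁻¹ • ∑ j, Y j with hμ
  set Z : Fin m → E := fun j => Y j - μ with hZdef
  have hsumY : ∑ j, Y j = (m : ℝ) • μ := by
    rw [hμ, smul_smul, mul_inv_cancel₀ hmR, one_smul]
  have hZ : ∑ j, Z j = 0 := by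
    simp only [hZdef, Finset.sum_sub_distrib, Finset.sum_const, Finset.card_univ,
      Fintype.card_fin, hsumY, nsmul_eq_mul]
    rw [Nat.cast_smul_eq_nsmul]
    simp [sub_eq_zero]
  have hpt : ∀ σ : Fin A → Fin m,
      (A : ℝ)⁻¹ • ∑ l, Y (σ l) - μ = (A : ℝ)⁻¹ • ∑ l, Z (σ l) := by
    intro σ
    have : ∑ l, Z (σ l) = ∑ l, Y (σ l) - (A : ℝ) • μ := by
      simp only [hZdef, Finset.sum_sub_distrib, Finset.sum_const, Finset.card_univ,
        Fintype.card_fin]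
      rw [← Nat.cast_smul_eq_nsmul (R := ℝ)]
    rw [this, smul_sub, smul_smul, inv_mul_cancel₀ hAR, one_smul]
  have hZle : ∑ j, ‖Z j‖ ^ 2 ≤ ∑ j, ‖Y j‖ ^ 2 := by
    have hex : ∀ j, ‖Z j‖ ^ 2 = ‖Y j‖ ^ 2 - 2 * ⟪Y j, μ⟫ + ‖μ‖ ^ 2 := by
      intro j; rw [hZdef]; exact norm_sub_sq_real (Y j) μ
    rw [Finset.sum_congr rfl fun j _ => hex j]
    rw [Finset.sum_add_distrib, Finset.sum_sub_distrib, ← Finset.mul_sum, ← sum_inner, hsumY,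
      real_inner_smul_left, real_inner_self_eq_norm_sq, Finset.sum_const, Finset.card_univ,
      Fintype.card_fin, nsmul_eq_mul]
    have : (0:ℝ) ≤ (m : ℝ) * ‖μ‖ ^ 2 := by positivity
    nlinarith
  calc Esig (fun σ : Fin A → Fin m =>
        ‖(A : ℝ)⁻¹ • ∑ l, Y (σ l) - (m : ℝ)⁻¹ • ∑ j, Y j‖ ^ 2)
      = ((A : ℝ)⁻¹ ^ 2 * ((A : ℝ) * (m : ℝ) ^ (A - 1) * ∑ j, ‖Z j‖ ^ 2)) / (m : ℝ) ^ A := by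
        rw [Esig]
        congr 1
        rw [← var_sum Z hZ A, Finset.mul_sum]
        refine Finset.sum_congr rfl fun σ _ => ?_
        rw [← hμ, hpt σ, norm_smul, mul_pow]
        congr 1
        rw [norm_inv, Real.norm_natCast]
    _ = (A : ℝ)⁻¹ * ((m : ℝ)⁻¹ * ∑ j, ‖Z j‖ ^ 2) := by
        obtain ⟨B, rfl⟩ : ∃ B, A = B + 1 := ⟨A - 1, (Nat.succ_pred_eq_of_pos hA).symm⟩
        simp only [Nat.add_sub_cancel]
        rw [pow_succ]
        have hBR : ((B:ℝ) + 1) ≠ 0 := by positivity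
        push_cast
        field_simp
        ring
    _ ≤ (A : ℝ)⁻¹ * ((m : ℝ)⁻¹ * ∑ j, ‖Y j‖ ^ 2) := by
        have h1 : (0:ℝ) ≤ (A : ℝ)⁻¹ := by positivity
        have h2 : (0:ℝ) ≤ (m : ℝ)⁻¹ := by positivity
        exact mul_le_mul_of_nonneg_left (mul_le_mul_of_nonneg_left hZle h2) h1

/-- The SAGA estimator deviation bound, abstractly. -/
lemma saga_dev {E : Type*} [NormedAddCommGroup E] [InnerProductSpace ℝ E]
    {m A N : ℕ} (hm : 0 < m) (hA : 0 < A) (g : Fin m → Euc N → E) (C : ℝ)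
    (hC : ∀ j a b, ‖g j a - g j b‖ ≤ C * ‖a - b‖) (x xstar : Euc N) (φ : Fin m → Euc N) :
    Esig (fun σ : Fin A → Fin m =>
        ‖((A : ℝ)⁻¹ • ∑ l, (g (σ l) x - g (σ l) (φ (σ l))) + (m : ℝ)⁻¹ • ∑ j, g j (φ j))
          - (m : ℝ)⁻¹ • ∑ j, g j xstar‖ ^ 2)
      ≤ 2 * C ^ 2 * ((A : ℝ)⁻¹ * ((m : ℝ)⁻¹ * ∑ j, ‖x - φ j‖ ^ 2) + ‖x - xstar‖ ^ 2) := by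
  set Y : Fin m → E := fun j => g j x - g j (φ j) with hY
  have hdecomp : ∀ σ : Fin A → Fin m,
      ((A : ℝ)⁻¹ • ∑ l, (g (σ l) x - g (σ l) (φ (σ l))) + (m : ℝ)⁻¹ • ∑ j, g j (φ j))
        - (m : ℝ)⁻¹ • ∑ j, g j xstar
      = ((A : ℝ)⁻¹ • ∑ l, Y (σ l) - (m : ℝ)⁻¹ • ∑ j, Y j)
        + ((m : ℝ)⁻¹ • ∑ j, (g j x - g j xstar)) := by
    intro σ
    simp only [hY, Finset.sum_sub_distrib, smul_sub]
    abel
  have hconst : ‖(m : ℝ)⁻¹ • ∑ j, (g j x - g j xstar)‖ ≤ C * ‖x - xstar‖ := by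
    rw [norm_smul]
    calc ‖(m:ℝ)⁻¹‖ * ‖∑ j, (g j x - g j xstar)‖
        ≤ (m:ℝ)⁻¹ * ∑ j, ‖g j x - g j xstar‖ := by
          rw [norm_inv, Real.norm_natCast]
          exact mul_le_mul_of_nonneg_left (norm_sum_le _ _) (by positivity)
      _ ≤ (m:ℝ)⁻¹ * ∑ j : Fin m, C * ‖x - xstar‖ := by
          refine mul_le_mul_of_nonneg_left (Finset.sum_le_sum fun j _ => hC j x xstar)
            (by positivity)
      _ = C * ‖x - xstar‖ := by
          rw [Finset.sum_const, Finset.card_univ, Fintype.card_fin, nsmul_eq_mul]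
          have : (m:ℝ) ≠ 0 := Nat.cast_ne_zero.2 hm.ne'
          field_simp
  have hptbd : ∀ σ : Fin A → Fin m,
      ‖((A : ℝ)⁻¹ • ∑ l, (g (σ l) x - g (σ l) (φ (σ l))) + (m : ℝ)⁻¹ • ∑ j, g j (φ j))
          - (m : ℝ)⁻¹ • ∑ j, g j xstar‖ ^ 2
      ≤ 2 * ‖(A : ℝ)⁻¹ • ∑ l, Y (σ l) - (m : ℝ)⁻¹ • ∑ j, Y j‖ ^ 2
        + 2 * (C ^ 2 * ‖x - xstar‖ ^ 2) := by
    intro σ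
    rw [hdecomp σ]
    refine (two_sq_bound _ _).trans ?_
    have h2 : ‖(m : ℝ)⁻¹ • ∑ j, (g j x - g j xstar)‖ ^ 2 ≤ C ^ 2 * ‖x - xstar‖ ^ 2 := by
      rw [← mul_pow]
      exact pow_le_pow_left₀ (norm_nonneg _) hconst 2
    nlinarith [norm_nonneg ((A : ℝ)⁻¹ • ∑ l, Y (σ l) - (m : ℝ)⁻¹ • ∑ j, Y j)]
  calc Esig (fun σ : Fin A → Fin m =>
        ‖((A : ℝ)⁻¹ • ∑ l, (g (σ l) x - g (σ l) (φ (σ l))) + (m : ℝ)⁻¹ • ∑ j, g j (φ j))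
          - (m : ℝ)⁻¹ • ∑ j, g j xstar‖ ^ 2)
      ≤ Esig (fun σ : Fin A → Fin m =>
          2 * ‖(A : ℝ)⁻¹ • ∑ l, Y (σ l) - (m : ℝ)⁻¹ • ∑ j, Y j‖ ^ 2
            + 2 * (C ^ 2 * ‖x - xstar‖ ^ 2)) := Esig_mono hm hptbd
    _ = 2 * Esig (fun σ : Fin A → Fin m =>
          ‖(A : ℝ)⁻¹ • ∑ l, Y (σ l) - (m : ℝ)⁻¹ • ∑ j, Y j‖ ^ 2)
          + 2 * (C ^ 2 * ‖x - xstar‖ ^ 2) := by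
        rw [Esig_add, Esig_mul, Esig_mul, Esig_const hm]
    _ ≤ 2 * ((A : ℝ)⁻¹ * ((m : ℝ)⁻¹ * ∑ j, ‖Y j‖ ^ 2)) + 2 * (C ^ 2 * ‖x - xstar‖ ^ 2) := by
        have := saga_var (E := E) hm hA Y
        linarith
    _ ≤ 2 * ((A : ℝ)⁻¹ * ((m : ℝ)⁻¹ * ∑ j, C ^ 2 * ‖x - φ j‖ ^ 2))
          + 2 * (C ^ 2 * ‖x - xstar‖ ^ 2) := by
        have hYj : ∀ j, ‖Y j‖ ^ 2 ≤ C ^ 2 * ‖x - φ j‖ ^ 2 := by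
          intro j
          rw [← mul_pow]
          exact pow_le_pow_left₀ (norm_nonneg _) (hC j x (φ j)) 2
        have h1 : ∑ j, ‖Y j‖ ^ 2 ≤ ∑ j, C ^ 2 * ‖x - φ j‖ ^ 2 :=
          Finset.sum_le_sum fun j _ => hYj j
        have h2 : (0:ℝ) ≤ (A : ℝ)⁻¹ := by positivity
        have h3 : (0:ℝ) ≤ (m : ℝ)⁻¹ := by positivity
        nlinarith [mul_le_mul_of_nonneg_left (mul_le_mul_of_nonneg_left h1 h3) h2]
    _ = 2 * C ^ 2 * ((A : ℝ)⁻¹ * ((m : ℝ)⁻¹ * ∑ j, ‖x - φ j‖ ^ 2) + ‖x - xstar‖ ^ 2) := by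
        rw [← Finset.mul_sum]
        ring

/-- The "matrix of columns" of a linear map, as a vector in an `L²` product space. -/
def colVec {N M : ℕ} : (Euc N →L[ℝ] Euc M) →ₗ[ℝ] PiLp 2 (fun _ : Fin N => Euc M) where
  toFun T := WithLp.toLp 2 (fun j => T (EuclideanSpace.single j 1))
  map_add' T T' := rfl
  map_smul' c T := rfl

lemma frob_eq_colVec {N M : ℕ} (T : Euc N →L[ℝ] Euc M) : frobNorm T = ‖colVec T‖ := by
  rw [frobNorm, PiLp.norm_eq_of_L2]
  rfl

lemma frob_nonneg {N M : ℕ} (T : Euc N →L[ℝ] Euc M) : 0 ≤ frobNorm T :=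
  Real.sqrt_nonneg _

set_option maxHeartbeats 1000000 in
lemma transApp_norm_le {N M : ℕ} (T : Euc N →L[ℝ] Euc M) (v : Euc M) :
    ‖transApp T v‖ ≤ frobNorm T * ‖v‖ := by
  have hsq : ‖transApp T v‖ ^ 2 ≤ (frobNorm T * ‖v‖) ^ 2 := by
    have h1 : ‖transApp T v‖ ^ 2 = ∑ j : Fin N, ⟪v, T (EuclideanSpace.single j 1)⟫ ^ 2 := by
      rw [PiLp.norm_sq_eq_of_L2]
      refine Finset.sum_congr rfl fun j _ => ?_
      have : (transApp T v) j = ⟪v, T (EuclideanSpace.single j 1)⟫ := by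
        have h2 : ⟪transApp T v, EuclideanSpace.single j (1:ℝ)⟫
            = ⟪v, T (EuclideanSpace.single j 1)⟫ :=
          ContinuousLinearMap.adjoint_inner_left T (EuclideanSpace.single j (1:ℝ)) v
        rw [EuclideanSpace.inner_single_right] at h2
        simpa using h2
      rw [this, Real.norm_eq_abs, sq_abs]
    rw [h1, mul_pow]
    have h3 : ∀ j : Fin N, ⟪v, T (EuclideanSpace.single j 1)⟫ ^ 2
        ≤ ‖v‖ ^ 2 * ‖T (EuclideanSpace.single j 1)‖ ^ 2 := by
      intro j
      have := abs_real_inner_le_norm v (T (EuclideanSpace.single j 1))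
      calc ⟪v, T (EuclideanSpace.single j 1)⟫ ^ 2
          = |⟪v, T (EuclideanSpace.single j 1)⟫| ^ 2 := (sq_abs _).symm
        _ ≤ (‖v‖ * ‖T (EuclideanSpace.single j 1)‖) ^ 2 := by
            apply pow_le_pow_left₀ (abs_nonneg _) this
        _ = ‖v‖ ^ 2 * ‖T (EuclideanSpace.single j 1)‖ ^ 2 := by ring
    calc ∑ j : Fin N, ⟪v, T (EuclideanSpace.single j 1)⟫ ^ 2
        ≤ ∑ j : Fin N, ‖v‖ ^ 2 * ‖T (EuclideanSpace.single j 1)‖ ^ 2 :=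
          Finset.sum_le_sum fun j _ => h3 j
      _ = frobNorm T ^ 2 * ‖v‖ ^ 2 := by
          rw [← Finset.mul_sum, frobNorm, Real.sq_sqrt (by positivity)]
          ring
  have h0 : 0 ≤ frobNorm T * ‖v‖ := mul_nonneg (frob_nonneg T) (norm_nonneg v)
  nlinarith [norm_nonneg (transApp T v)]

set_option maxHeartbeats 2000000 in
/-- Corollary 2 (explicit constants): variance bound on the SCDF-SAGA update direction. -/
theorem saga_update_direction_variance_bound
    {n m N M A : ℕ} (hn : 0 < n) (hm : 0 < m) (hA : 0 < A)
    (BF LF BG LG : ℝ) (hBF : 0 < BF) (hLF : 0 < LF) (hBG : 0 < BG) (hLG : 0 < LG)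
    (Fi : Fin n → Euc M → ℝ) (G : Fin m → Euc N → Euc M)
    (J : Fin m → Euc N → (Euc N →L[ℝ] Euc M)) (gradF : Fin n → Euc M → Euc M)
    (hsm : SmoothData Fi G J gradF)
    (hA2 : Assumption2 G J gradF BF LF BG LG)
    (xstar : Euc N) (x : Euc N) (φ : Fin m → Euc N) (β : Fin n → Euc N) :
    (n : ℝ)⁻¹ * ∑ i, Esig (fun σ : Fin A → Fin m =>
        ‖transApp (JhatSAGA J σ x φ) (gradF i (GhatSAGA G σ x φ)) + β i‖ ^ 2)
      ≤ 8 * (BF ^ 2 * LG ^ 2 + BG ^ 4 * LF ^ 2) *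
          ((1 / (A : ℝ)) * ((m : ℝ)⁻¹ * ∑ j, ‖x - φ j‖ ^ 2) + ‖x - xstar‖ ^ 2) +
        2 * ((n : ℝ)⁻¹ * ∑ i,
          ‖β i - (-(transApp (Jbar J xstar) (gradF i (Gbar G xstar))))‖ ^ 2) := by
  obtain ⟨hBFb, hLFl, hBGb, hGlip, hJlip⟩ := hA2
  set S : ℝ := (A : ℝ)⁻¹ * ((m : ℝ)⁻¹ * ∑ j, ‖x - φ j‖ ^ 2) + ‖x - xstar‖ ^ 2 with hSdef
  have hS0 : 0 ≤ S := by
    have h1 : (0:ℝ) ≤ ∑ j, ‖x - φ j‖ ^ 2 :=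
      Finset.sum_nonneg fun j _ => pow_nonneg (norm_nonneg _) 2
    have h2 : (0:ℝ) ≤ ‖x - xstar‖ ^ 2 := pow_nonneg (norm_nonneg _) 2
    have h3 : (0:ℝ) ≤ (A : ℝ)⁻¹ * ((m : ℝ)⁻¹ * ∑ j, ‖x - φ j‖ ^ 2) :=
      mul_nonneg (inv_nonneg.2 (Nat.cast_nonneg _))
        (mul_nonneg (inv_nonneg.2 (Nat.cast_nonneg _)) h1)
    rw [hSdef]
    exact add_nonneg h3 h2
  -- the column vectors of the Jacobians
  set K : Fin m → Euc N → PiLp 2 (fun _ : Fin N => Euc M) := fun j y => colVec (J j y) with hK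
  have hKlip : ∀ j a b, ‖K j a - K j b‖ ≤ LG * ‖a - b‖ := by
    intro j a b
    have h : K j a - K j b = colVec (J j a - J j b) := (map_sub colVec _ _).symm
    rw [h, ← frob_eq_colVec]
    exact hJlip j a b
  -- deviation bound for Ĝ
  have hGdev : Esig (fun σ : Fin A → Fin m => ‖GhatSAGA G σ x φ - Gbar G xstar‖ ^ 2)
      ≤ 2 * BG ^ 2 * S := by
    have h := saga_dev hm hA G BG hGlip x xstar φ
    simpa only [GhatSAGA, Gbar, hSdef] using h
  -- deviation bound for ∂Ĝ
  have hJdev : Esig (fun σ : Fin A → Fin m => frobNorm (JhatSAGA J σ x φ - Jbar J xstar) ^ 2)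
      ≤ 2 * LG ^ 2 * S := by
    have h := saga_dev hm hA K LG hKlip x xstar φ
    have heq : (fun σ : Fin A → Fin m => frobNorm (JhatSAGA J σ x φ - Jbar J xstar) ^ 2)
        = fun σ : Fin A → Fin m =>
          ‖((A : ℝ)⁻¹ • ∑ l, (K (σ l) x - K (σ l) (φ (σ l))) + (m : ℝ)⁻¹ • ∑ j, K j (φ j))
            - (m : ℝ)⁻¹ • ∑ j, K j xstar‖ ^ 2 := by
      funext σ
      rw [frob_eq_colVec]
      congr 2
      simp only [JhatSAGA, Jbar, map_sub, map_add, map_smul, map_sum, hK]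
    rw [heq]
    exact h
  -- Frobenius norm bound for the averaged Jacobian at x*
  have hJstar : frobNorm (Jbar J xstar) ≤ BG := by
    rw [frob_eq_colVec, Jbar, map_smul, map_sum]
    have hmR : (m:ℝ) ≠ 0 := Nat.cast_ne_zero.2 hm.ne'
    calc ‖(m:ℝ)⁻¹ • ∑ j, colVec (J j xstar)‖
        ≤ (m:ℝ)⁻¹ * ∑ j, ‖colVec (J j xstar)‖ := by
          rw [norm_smul, norm_inv, Real.norm_natCast]
          exact mul_le_mul_of_nonneg_left (norm_sum_le _ _) (inv_nonneg.2 (Nat.cast_nonneg _))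
      _ ≤ (m:ℝ)⁻¹ * ∑ j : Fin m, BG := by
          refine mul_le_mul_of_nonneg_left (Finset.sum_le_sum fun j _ => ?_)
            (inv_nonneg.2 (Nat.cast_nonneg _))
          rw [← frob_eq_colVec]
          exact hBGb j xstar
      _ = BG := by
          rw [Finset.sum_const, Finset.card_univ, Fintype.card_fin, nsmul_eq_mul]
          field_simp
  -- pointwise bound
  have hpt : ∀ (i : Fin n) (σ : Fin A → Fin m),
      ‖transApp (JhatSAGA J σ x φ) (gradF i (GhatSAGA G σ x φ)) + β i‖ ^ 2
      ≤ 4 * BF ^ 2 * frobNorm (JhatSAGA J σ x φ - Jbar J xstar) ^ 2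
        + (4 * (BG ^ 2 * LF ^ 2) * ‖GhatSAGA G σ x φ - Gbar G xstar‖ ^ 2
        + 2 * ‖β i - (-(transApp (Jbar J xstar) (gradF i (Gbar G xstar))))‖ ^ 2) := by
    intro i σ
    set Jh := JhatSAGA J σ x φ with hJh
    set Gh := GhatSAGA G σ x φ with hGh
    set u := gradF i Gh with hu
    set us := gradF i (Gbar G xstar) with hus
    set a := transApp Jh u - transApp (Jbar J xstar) us with ha
    have hsplit : transApp Jh u + β i = a + (β i - (-(transApp (Jbar J xstar) us))) := by
      rw [ha, sub_neg_eq_add]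
      abel
    have hadecomp : a = transApp (Jh - Jbar J xstar) u + transApp (Jbar J xstar) (u - us) := by
      simp only [transApp, ha, map_sub, ContinuousLinearMap.coe_sub', Pi.sub_apply]
      abel
    have hna : ‖a‖ ≤ BF * frobNorm (Jh - Jbar J xstar) + BG * (LF * ‖Gh - Gbar G xstar‖) := by
      rw [hadecomp]
      refine (norm_add_le _ _).trans ?_
      have h1 : ‖transApp (Jh - Jbar J xstar) u‖ ≤ frobNorm (Jh - Jbar J xstar) * BF :=
        (transApp_norm_le _ _).trans
          (mul_le_mul_of_nonneg_left (hBFb i Gh) (frob_nonneg _))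
      have h2 : ‖transApp (Jbar J xstar) (u - us)‖ ≤ BG * (LF * ‖Gh - Gbar G xstar‖) := by
        refine (transApp_norm_le _ _).trans ?_
        exact mul_le_mul hJstar (hLFl i Gh (Gbar G xstar)) (norm_nonneg _) hBG.le
      linarith
    calc ‖transApp Jh u + β i‖ ^ 2
        = ‖a + (β i - (-(transApp (Jbar J xstar) us)))‖ ^ 2 := by rw [hsplit]
      _ ≤ 2 * ‖a‖ ^ 2 + 2 * ‖β i - (-(transApp (Jbar J xstar) us))‖ ^ 2 := two_sq_bound _ _
      _ ≤ 4 * BF ^ 2 * frobNorm (Jh - Jbar J xstar) ^ 2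
            + (4 * (BG ^ 2 * LF ^ 2) * ‖Gh - Gbar G xstar‖ ^ 2
            + 2 * ‖β i - (-(transApp (Jbar J xstar) us))‖ ^ 2) := by
          have h0a : 0 ≤ ‖a‖ := norm_nonneg a
          have h0f : 0 ≤ frobNorm (Jh - Jbar J xstar) := frob_nonneg _
          have h0g : 0 ≤ ‖Gh - Gbar G xstar‖ := norm_nonneg _
          nlinarith [sq_nonneg (BF * frobNorm (Jh - Jbar J xstar)
            - BG * (LF * ‖Gh - Gbar G xstar‖)), mul_nonneg hBF.le h0f,
            mul_nonneg (mul_nonneg hBG.le hLF.le) h0g]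
  -- take expectations
  have hEsig : ∀ i : Fin n,
      Esig (fun σ : Fin A → Fin m =>
        ‖transApp (JhatSAGA J σ x φ) (gradF i (GhatSAGA G σ x φ)) + β i‖ ^ 2)
      ≤ 8 * (BF ^ 2 * LG ^ 2 + BG ^ 4 * LF ^ 2) * S
        + 2 * ‖β i - (-(transApp (Jbar J xstar) (gradF i (Gbar G xstar))))‖ ^ 2 := by
    intro i
    calc Esig (fun σ : Fin A → Fin m =>
          ‖transApp (JhatSAGA J σ x φ) (gradF i (GhatSAGA G σ x φ)) + β i‖ ^ 2)
        ≤ Esig (fun σ : Fin A → Fin m =>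
            4 * BF ^ 2 * frobNorm (JhatSAGA J σ x φ - Jbar J xstar) ^ 2
            + (4 * (BG ^ 2 * LF ^ 2) * ‖GhatSAGA G σ x φ - Gbar G xstar‖ ^ 2
            + 2 * ‖β i - (-(transApp (Jbar J xstar) (gradF i (Gbar G xstar))))‖ ^ 2)) :=
          Esig_mono hm (hpt i)
      _ = 4 * BF ^ 2 * Esig (fun σ : Fin A → Fin m =>
              frobNorm (JhatSAGA J σ x φ - Jbar J xstar) ^ 2)
            + (4 * (BG ^ 2 * LF ^ 2) * Esig (fun σ : Fin A → Fin m =>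
              ‖GhatSAGA G σ x φ - Gbar G xstar‖ ^ 2)
            + 2 * ‖β i - (-(transApp (Jbar J xstar) (gradF i (Gbar G xstar))))‖ ^ 2) := by
          rw [Esig_add, Esig_mul, Esig_add, Esig_mul,
            Esig_const hm (2 * ‖β i - (-(transApp (Jbar J xstar) (gradF i (Gbar G xstar))))‖ ^ 2)]
      _ ≤ 4 * BF ^ 2 * (2 * LG ^ 2 * S)
            + (4 * (BG ^ 2 * LF ^ 2) * (2 * BG ^ 2 * S)
            + 2 * ‖β i - (-(transApp (Jbar J xstar) (gradF i (Gbar G xstar))))‖ ^ 2) := by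
          have e1 := mul_le_mul_of_nonneg_left hJdev
            (mul_nonneg (by norm_num : (0:ℝ) ≤ 4) (sq_nonneg BF))
          have e2 := mul_le_mul_of_nonneg_left hGdev
            (mul_nonneg (by norm_num : (0:ℝ) ≤ 4) (mul_nonneg (sq_nonneg BG) (sq_nonneg LF)))
          linarith
      _ = 8 * (BF ^ 2 * LG ^ 2 + BG ^ 4 * LF ^ 2) * S
            + 2 * ‖β i - (-(transApp (Jbar J xstar) (gradF i (Gbar G xstar))))‖ ^ 2 := by
          ring
  -- average over i
  have hnR : (n:ℝ) ≠ 0 := Nat.cast_ne_zero.2 hn.ne'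
  have hsum : ∑ i, Esig (fun σ : Fin A → Fin m =>
        ‖transApp (JhatSAGA J σ x φ) (gradF i (GhatSAGA G σ x φ)) + β i‖ ^ 2)
      ≤ ∑ i, (8 * (BF ^ 2 * LG ^ 2 + BG ^ 4 * LF ^ 2) * S
        + 2 * ‖β i - (-(transApp (Jbar J xstar) (gradF i (Gbar G xstar))))‖ ^ 2) :=
    Finset.sum_le_sum fun i _ => hEsig i
  have hfinal : (n : ℝ)⁻¹ * ∑ i, (8 * (BF ^ 2 * LG ^ 2 + BG ^ 4 * LF ^ 2) * S
        + 2 * ‖β i - (-(transApp (Jbar J xstar) (gradF i (Gbar G xstar))))‖ ^ 2)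
      = 8 * (BF ^ 2 * LG ^ 2 + BG ^ 4 * LF ^ 2) * S
        + 2 * ((n : ℝ)⁻¹ * ∑ i,
          ‖β i - (-(transApp (Jbar J xstar) (gradF i (Gbar G xstar))))‖ ^ 2) := by
    rw [Finset.sum_add_distrib, Finset.sum_const, Finset.card_univ, Fintype.card_fin,
      nsmul_eq_mul, ← Finset.mul_sum]
    field_simp
  have hstep : (n : ℝ)⁻¹ * ∑ i, Esig (fun σ : Fin A → Fin m =>
        ‖transApp (JhatSAGA J σ x φ) (gradF i (GhatSAGA G σ x φ)) + β i‖ ^ 2)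
      ≤ 8 * (BF ^ 2 * LG ^ 2 + BG ^ 4 * LF ^ 2) * S
        + 2 * ((n : ℝ)⁻¹ * ∑ i,
          ‖β i - (-(transApp (Jbar J xstar) (gradF i (Gbar G xstar))))‖ ^ 2) := by
    rw [← hfinal]
    exact mul_le_mul_of_nonneg_left hsum (inv_nonneg.2 (Nat.cast_nonneg _))
  rw [one_div]
  exact hstep
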